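/- I_b^{(∞)} is subadditive under tensor products: I_b^{(∞)}(ρ_{AB} ⊗ σ_{A'B'}) ≤ I_b^{(∞)}(ρ_{AB}) + I_b^{(∞)}(σ_{A'B'}), where the bipartite cut is AA' : BB'. -/

import Mathlib

open scoped BigOperators Kronecker ComplexOrder
open Matrix Filter Topology

noncomputable section

open scoped MatrixOrder in
theorem psd_exists_conjTranspose_mul {n : Type} [Fintype n] [DecidableEq n] {A : Matrix n n ℂ}
    (hA : A.PosSemidef) : ∃ B : Matrix n n ℂ, A = Bᴴ * B := by
  obtain ⟨a, rfl⟩ := CStarAlgebra.nonneg_iff_eq_star_mul_self.mp hA.nonneg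
  exact ⟨a, rfl⟩

/-- Shannon entropy (log base 2) of a finitely supported distribution. -/
def shannon {I : Type} [Fintype I] (p : I → ℝ) : ℝ := -∑ i, p i * Real.logb 2 (p i)

/-- `p` is a probability distribution. -/
def IsProbDist {I : Type} [Fintype I] (p : I → ℝ) : Prop :=
  (∀ i, 0 ≤ p i) ∧ ∑ i, p i = 1

/-- First marginal of a joint distribution. -/
def margA {I J : Type} [Fintype J] (p : I × J → ℝ) : I → ℝ := fun i => ∑ j, p (i, j)

/-- Second marginal of a joint distribution. -/
def margB {I J : Type} [Fintype I] (p : I × J → ℝ) : J → ℝ := fun j => ∑ i, p (i, j)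

/-- Classical mutual information of a joint distribution. -/
def classMI {I J : Type} [Fintype I] [Fintype J] (p : I × J → ℝ) : ℝ :=
  shannon (margA p) + shannon (margB p) - shannon p

/-- Kullback-Leibler divergence (log base 2). -/
def klDiv {I : Type} [Fintype I] (p q : I → ℝ) : ℝ := ∑ i, p i * Real.logb 2 (p i / q i)

/-- A density operator: positive semidefinite with unit trace. -/
def IsDensity {n : Type} [Fintype n] (ρ : Matrix n n ℂ) : Prop :=
  ρ.PosSemidef ∧ ρ.trace = 1

/-- Von Neumann entropy (log base 2) via the eigenvalues of a Hermitian matrix. -/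
def vnEntropy {n : Type} [Fintype n] [DecidableEq n] (ρ : Matrix n n ℂ) : ℝ :=
  if h : ρ.IsHermitian then -∑ i, h.eigenvalues i * Real.logb 2 (h.eigenvalues i) else 0

/-- Partial trace over the second tensor factor. -/
def ptraceB {A B : Type} [Fintype B] (ρ : Matrix (A × B) (A × B) ℂ) : Matrix A A ℂ :=
  Matrix.of fun a a' => ∑ b, ρ (a, b) (a', b)

/-- Partial trace over the first tensor factor. -/
def ptraceA {A B : Type} [Fintype A] (ρ : Matrix (A × B) (A × B) ℂ) : Matrix B B ℂ :=
  Matrix.of fun b b' => ∑ a, ρ (a, b) (a, b')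

/-- Quantum mutual information I(A:B) = S(ρ_A) + S(ρ_B) - S(ρ_{AB}). -/
def mutInfo {A B : Type} [Fintype A] [Fintype B] [DecidableEq A] [DecidableEq B]
    (ρ : Matrix (A × B) (A × B) ℂ) : ℝ :=
  vnEntropy (ptraceB ρ) + vnEntropy (ptraceA ρ) - vnEntropy ρ

/-- Tensor product of two bipartite states, with the cut (A₁A₂ : B₁B₂). -/
def tens2 {A₁ B₁ A₂ B₂ : Type}
    (ρ : Matrix (A₁ × B₁) (A₁ × B₁) ℂ) (σ : Matrix (A₂ × B₂) (A₂ × B₂) ℂ) :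
    Matrix ((A₁ × A₂) × (B₁ × B₂)) ((A₁ × A₂) × (B₁ × B₂)) ℂ :=
  Matrix.of fun x y => ρ (x.1.1, x.2.1) (y.1.1, y.2.1) * σ (x.1.2, x.2.2) (y.1.2, y.2.2)

/-- n-fold tensor power of a bipartite state, with the A^n : B^n cut. -/
def tpow {A B : Type} (σ : Matrix (A × B) (A × B) ℂ) (n : ℕ) :
    Matrix ((Fin n → A) × (Fin n → B)) ((Fin n → A) × (Fin n → B)) ℂ :=
  Matrix.of fun x y => ∏ i, σ (x.1 i, x.2 i) (y.1 i, y.2 i)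

/-- Reduced state of the k-th copy (partial trace over all other copies). -/
def copyMarginal {A B : Type} [Fintype A] [Fintype B] [DecidableEq A] [DecidableEq B] {n : ℕ}
    (ρ : Matrix ((Fin n → A) × (Fin n → B)) ((Fin n → A) × (Fin n → B)) ℂ) (k : Fin n) :
    Matrix (A × B) (A × B) ℂ :=
  Matrix.of fun x y => ∑ f : Fin n → A, ∑ g : Fin n → B,
    if f k = x.1 ∧ g k = x.2 then
      ρ (f, g) (Function.update f k y.1, Function.update g k y.2) else 0

/-- `τ` is an n-copy broadcast state of `ρ`. -/
def IsBroadcast {A B : Type} [Fintype A] [Fintype B] [DecidableEq A] [DecidableEq B] (n : ℕ)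
    (τ : Matrix ((Fin n → A) × (Fin n → B)) ((Fin n → A) × (Fin n → B)) ℂ)
    (ρ : Matrix (A × B) (A × B) ℂ) : Prop :=
  IsDensity τ ∧ ∀ k : Fin n, copyMarginal τ k = ρ

/-- n-copy broadcast mutual information (I_b)_n. -/
def Ib {A B : Type} [Fintype A] [Fintype B] [DecidableEq A] [DecidableEq B] (n : ℕ)
    (ρ : Matrix (A × B) (A × B) ℂ) : ℝ :=
  sInf {x | ∃ τ, IsBroadcast n τ ρ ∧ x = mutInfo τ}

/-- Partial trace of a state on (A A' : B B') over the primed (ancilla) systems. -/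
def ptracePrime {A B A' B' : Type} [Fintype A'] [Fintype B']
    (τ : Matrix ((A × A') × (B × B')) ((A × A') × (B × B')) ℂ) :
    Matrix (A × B) (A × B) ℂ :=
  Matrix.of fun x y => ∑ a', ∑ b', τ ((x.1, a'), (x.2, b')) ((y.1, a'), (y.2, b'))

/-- Partial trace of a state on (A A' : B B') over the unprimed systems. -/
def ptraceMain {A B A' B' : Type} [Fintype A] [Fintype B]
    (τ : Matrix ((A × A') × (B × B')) ((A × A') × (B × B')) ℂ) :
    Matrix (A' × B') (A' × B') ℂ :=
  Matrix.of fun x y => ∑ a, ∑ b, τ ((a, x.1), (b, x.2)) ((a, y.1), (b, y.2))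

/-- Conditional entanglement of mutual information (CEMI). -/
def EI {A B : Type} [Fintype A] [Fintype B] [DecidableEq A] [DecidableEq B]
    (ρ : Matrix (A × B) (A × B) ℂ) : ℝ :=
  (1 / 2) * sInf {x | ∃ (dA dB : ℕ)
    (τ : Matrix ((A × Fin dA) × (B × Fin dB)) ((A × Fin dA) × (B × Fin dB)) ℂ),
    IsDensity τ ∧ ptracePrime τ = ρ ∧ x = mutInfo τ - mutInfo (ptraceMain τ)}

/-- Classical squashed entanglement, via the ensemble formula. -/
def EsqC {A B : Type} [Fintype A] [Fintype B] [DecidableEq A] [DecidableEq B]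
    (ρ : Matrix (A × B) (A × B) ℂ) : ℝ :=
  (1 / 2) * sInf {x | ∃ (m : ℕ) (p : Fin m → ℝ) (σ : Fin m → Matrix (A × B) (A × B) ℂ),
    (∀ k, 0 ≤ p k) ∧ (∑ k, p k = 1) ∧ (∀ k, IsDensity (σ k)) ∧
    (∑ k, (p k : ℂ) • σ k = ρ) ∧ x = ∑ k, p k * mutInfo (σ k)}

/-- Separability of a bipartite state. -/
def Separable {A B : Type} [Fintype A] [Fintype B]
    (ρ : Matrix (A × B) (A × B) ℂ) : Prop :=
  ∃ (m : ℕ) (p : Fin m → ℝ) (σA : Fin m → Matrix A A ℂ) (σB : Fin m → Matrix B B ℂ),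
    (∀ k, 0 ≤ p k) ∧ (∑ k, p k = 1) ∧ (∀ k, IsDensity (σA k) ∧ IsDensity (σB k)) ∧
    ρ = ∑ k, (p k : ℂ) • (σA k ⊗ₖ σB k)

/-- A finite POVM. -/
def IsPOVM {A ι : Type} [Fintype A] [Fintype ι] [DecidableEq A]
    (M : ι → Matrix A A ℂ) : Prop :=
  (∀ i, (M i).PosSemidef) ∧ ∑ i, M i = 1

/-- Outcome distribution of a local product measurement. -/
def measProb {A B ι κ : Type} [Fintype A] [Fintype B]
    (M : ι → Matrix A A ℂ) (N : κ → Matrix B B ℂ)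
    (ρ : Matrix (A × B) (A × B) ℂ) : ι × κ → ℝ :=
  fun x => (((M x.1 ⊗ₖ N x.2) * ρ).trace).re

/-- Completeness condition for a family of Kraus operators. -/
def IsKraus {A A' ι : Type} [Fintype A] [Fintype A'] [Fintype ι] [DecidableEq A]
    (K : ι → Matrix A' A ℂ) : Prop :=
  ∑ i, (K i)ᴴ * K i = 1

/-- Action of the product channel Λ_A ⊗ Λ_B (given by Kraus operators) on a bipartite state. -/
def localApply {A B A' B' ι κ : Type} [Fintype A] [Fintype B] [Fintype ι] [Fintype κ]
    (K : ι → Matrix A' A ℂ) (L : κ → Matrix B' B ℂ)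
    (ρ : Matrix (A × B) (A × B) ℂ) : Matrix (A' × B') (A' × B') ℂ :=
  ∑ i, ∑ j, (K i ⊗ₖ L j) * ρ * (K i ⊗ₖ L j)ᴴ

/-- Measured relative entropy distance to separable states (with optimization over local POVMs). -/
def measREE {A B : Type} [Fintype A] [Fintype B] [DecidableEq A] [DecidableEq B]
    (ρ : Matrix (A × B) (A × B) ℂ) : ℝ :=
  sInf {x | ∃ σ : Matrix (A × B) (A × B) ℂ, IsDensity σ ∧ Separable σ ∧
    x = sSup {y | ∃ (m m' : ℕ) (M : Fin m → Matrix A A ℂ) (N : Fin m' → Matrix B B ℂ),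
      IsPOVM M ∧ IsPOVM N ∧ y = klDiv (measProb M N ρ) (measProb M N σ)}}


section Aux

open Polynomial

set_option linter.unusedSectionVars false

/-! ### charpoly and eigenvalue tools -/

lemma charpoly_unitary_conj {n : Type} [Fintype n] [DecidableEq n]
    (U M : Matrix n n ℂ) (hU : U ∈ Matrix.unitaryGroup n ℂ) :
    (U * M * star U).charpoly = M.charpoly := by
  set f : Matrix n n ℂ →+* Matrix n n ℂ[X] := (C : ℂ →+* ℂ[X]).mapMatrix with hf
  have hone : f U * f (star U) = 1 := by
    rw [← map_mul f, (Matrix.mem_unitaryGroup_iff).mp hU, _root_.map_one f]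
  have h1 : (U * M * star U).charmatrix = f U * M.charmatrix * f (star U) := by
    have hmap : ∀ N : Matrix n n ℂ, (C : ℂ →+* ℂ[X]).mapMatrix N = f N := fun _ => rfl
    simp only [Matrix.charmatrix, mul_sub, sub_mul, hmap, map_mul f]
    congr 1
    symm
    calc f U * Matrix.scalar n (X : ℂ[X]) * f (star U)
        = Matrix.scalar n (X : ℂ[X]) * (f U * f (star U)) := by
          rw [← (Matrix.scalar_commute (X : ℂ[X]) (fun r => Commute.all _ _) (f U)).eq, mul_assoc]
      _ = Matrix.scalar n (X : ℂ[X]) := by rw [hone, mul_one]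
  rw [Matrix.charpoly, Matrix.charpoly, h1, Matrix.det_mul, Matrix.det_mul]
  have : (f U).det * M.charmatrix.det * (f (star U)).det
      = M.charmatrix.det * ((f U).det * (f (star U)).det) := by ring
  rw [this, ← Matrix.det_mul, hone, Matrix.det_one, mul_one]

lemma charpoly_diagonal_c {n : Type} [Fintype n] [DecidableEq n] (d : n → ℂ) :
    (Matrix.diagonal d).charpoly = ∏ i, (X - C (d i)) := by
  have : (Matrix.diagonal d).charmatrix = Matrix.diagonal (fun i => X - C (d i)) := by
    ext i j
    by_cases h : i = j
    · subst h; simp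
    · simp [h, Matrix.diagonal_apply_ne _ h]
  rw [Matrix.charpoly, this, Matrix.det_diagonal]

lemma charpoly_hermitian {n : Type} [Fintype n] [DecidableEq n]
    (M : Matrix n n ℂ) (hM : M.IsHermitian) :
    M.charpoly = ∏ i, (X - C ((hM.eigenvalues i : ℂ))) := by
  conv_lhs => rw [hM.spectral_theorem, Unitary.conjStarAlgAut_apply]
  rw [charpoly_unitary_conj _ _ (hM.eigenvectorUnitary).2, charpoly_diagonal_c]
  rfl

lemma roots_charpoly_hermitian {n : Type} [Fintype n] [DecidableEq n]
    (M : Matrix n n ℂ) (hM : M.IsHermitian) :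
    M.charpoly.roots = (Finset.univ.val.map (fun i => (hM.eigenvalues i : ℂ))) := by
  rw [charpoly_hermitian M hM]
  rw [← Polynomial.roots_multiset_prod_X_sub_C (Finset.univ.val.map fun i => (hM.eigenvalues i : ℂ))]
  congr 1
  rw [Multiset.map_map]
  exact (Finset.prod_eq_multiset_prod _ _).symm

lemma sum_g_eigenvalues {n : Type} [Fintype n] [DecidableEq n]
    (M : Matrix n n ℂ) (hM : M.IsHermitian) (g : ℝ → ℝ) :
    ∑ i, g (hM.eigenvalues i) = ((M.charpoly.roots.map (fun z => g z.re)).sum) := by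
  rw [roots_charpoly_hermitian M hM, Multiset.map_map]
  rfl

lemma sum_eigenvalues_eq_trace_re {n : Type} [Fintype n] [DecidableEq n]
    (M : Matrix n n ℂ) (hM : M.IsHermitian) :
    ∑ i, hM.eigenvalues i = M.trace.re := by
  conv_rhs => rw [hM.spectral_theorem, Unitary.conjStarAlgAut_apply]
  rw [Matrix.trace_mul_cycle,
    (Matrix.mem_unitaryGroup_iff').mp (hM.eigenvectorUnitary).2, one_mul, Matrix.trace_diagonal]
  simp

/-! ### vnEntropy transported along charpoly -/

lemma sum_g_of_charpoly_prod {n ι : Type} [Fintype n] [DecidableEq n] [Fintype ι]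
    (M : Matrix n n ℂ) (hM : M.IsHermitian)
    (d : ι → ℝ) (h : M.charpoly = ∏ i, (X - C ((d i : ℂ)))) (g : ℝ → ℝ) :
    ∑ i, g (hM.eigenvalues i) = ∑ i, g (d i) := by
  rw [sum_g_eigenvalues M hM g, h]
  have : (∏ i, (X - C ((d i : ℂ)))) =
      ((Finset.univ.val.map fun i => ((d i : ℂ))).map fun a => X - C a).prod := by
    rw [Multiset.map_map]; exact Finset.prod_eq_multiset_prod _ _
  rw [this, Polynomial.roots_multiset_prod_X_sub_C, Multiset.map_map]
  rfl

lemma vnEntropy_of_charpoly_prod {n ι : Type} [Fintype n] [DecidableEq n] [Fintype ι]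
    (M : Matrix n n ℂ) (hM : M.IsHermitian)
    (d : ι → ℝ) (h : M.charpoly = ∏ i, (X - C ((d i : ℂ)))) :
    vnEntropy M = -∑ i, d i * Real.logb 2 (d i) := by
  rw [vnEntropy, dif_pos hM]
  rw [sum_g_of_charpoly_prod M hM d h (fun x => x * Real.logb 2 x)]

lemma vnEntropy_submatrix {m n : Type} [Fintype n] [Fintype m] [DecidableEq n] [DecidableEq m]
    (e : m ≃ n) (M : Matrix n n ℂ) (hM : M.IsHermitian) :
    vnEntropy (M.submatrix e e) = vnEntropy M := by
  have hs : (M.submatrix e e).IsHermitian := hM.submatrix e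
  have hc : (M.submatrix e e).charpoly = M.charpoly := by
    have : M.submatrix e e = Matrix.reindex e.symm e.symm M := rfl
    rw [this, Matrix.charpoly_reindex]
  rw [vnEntropy_of_charpoly_prod (M.submatrix e e) hs hM.eigenvalues
      (hc.trans (charpoly_hermitian M hM)), vnEntropy, dif_pos hM]

lemma conjTranspose_kronecker' {n m : Type} (A : Matrix n n ℂ) (B : Matrix m m ℂ) :
    (A ⊗ₖ B)ᴴ = Aᴴ ⊗ₖ Bᴴ := by
  ext ⟨i, j⟩ ⟨k, l⟩
  simp [Matrix.conjTranspose_apply, Matrix.kroneckerMap_apply, mul_comm]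

lemma isHermitian_kronecker {n m : Type} {A : Matrix n n ℂ} {B : Matrix m m ℂ}
    (hA : A.IsHermitian) (hB : B.IsHermitian) : (A ⊗ₖ B).IsHermitian := by
  unfold Matrix.IsHermitian
  rw [_root_.conjTranspose_kronecker', hA.eq, hB.eq]

lemma posSemidef_kronecker {n m : Type} [Fintype n] [Fintype m] [DecidableEq n] [DecidableEq m]
    {A : Matrix n n ℂ} {B : Matrix m m ℂ} (hA : A.PosSemidef) (hB : B.PosSemidef) :
    (A ⊗ₖ B).PosSemidef := by
  obtain ⟨P, rfl⟩ := psd_exists_conjTranspose_mul hA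
  obtain ⟨Q, rfl⟩ := psd_exists_conjTranspose_mul hB
  rw [Matrix.mul_kronecker_mul, ← _root_.conjTranspose_kronecker' P Q]
  exact Matrix.posSemidef_conjTranspose_mul_self _

lemma kronecker_mem_unitaryGroup {n m : Type} [Fintype n] [Fintype m] [DecidableEq n]
    [DecidableEq m] {U : Matrix n n ℂ} {V : Matrix m m ℂ}
    (hU : U ∈ Matrix.unitaryGroup n ℂ) (hV : V ∈ Matrix.unitaryGroup m ℂ) :
    U ⊗ₖ V ∈ Matrix.unitaryGroup (n × m) ℂ := by
  rw [Matrix.mem_unitaryGroup_iff]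
  have : (star (U ⊗ₖ V) : Matrix (n × m) (n × m) ℂ) = (star U) ⊗ₖ (star V) := by
    simpa [Matrix.star_eq_conjTranspose] using _root_.conjTranspose_kronecker' U V
  rw [this, ← Matrix.mul_kronecker_mul, (Matrix.mem_unitaryGroup_iff).mp hU,
    (Matrix.mem_unitaryGroup_iff).mp hV, Matrix.one_kronecker_one]

lemma charpoly_kronecker_hermitian {n m : Type} [Fintype n] [Fintype m] [DecidableEq n]
    [DecidableEq m] {A : Matrix n n ℂ} {B : Matrix m m ℂ}
    (hA : A.IsHermitian) (hB : B.IsHermitian) :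
    (A ⊗ₖ B).charpoly = ∏ p : n × m, (X - C (((hA.eigenvalues p.1 * hB.eigenvalues p.2 : ℝ) : ℂ))) := by
  have hdecomp : A ⊗ₖ B =
      ((hA.eigenvectorUnitary : Matrix n n ℂ) ⊗ₖ (hB.eigenvectorUnitary : Matrix m m ℂ)) *
        Matrix.diagonal (fun p : n × m => ((hA.eigenvalues p.1 : ℂ) * (hB.eigenvalues p.2 : ℂ))) *
        star ((hA.eigenvectorUnitary : Matrix n n ℂ) ⊗ₖ (hB.eigenvectorUnitary : Matrix m m ℂ)) := by
    conv_lhs => rw [hA.spectral_theorem, hB.spectral_theorem, Unitary.conjStarAlgAut_apply, Unitary.conjStarAlgAut_apply]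
    rw [Matrix.mul_kronecker_mul, Matrix.mul_kronecker_mul]
    congr 1
    · congr 1
      rw [Matrix.diagonal_kronecker_diagonal]
      rfl
    · simpa [Matrix.star_eq_conjTranspose] using
        (_root_.conjTranspose_kronecker' (hA.eigenvectorUnitary : Matrix n n ℂ)
          (hB.eigenvectorUnitary : Matrix m m ℂ)).symm
  rw [hdecomp, charpoly_unitary_conj _ _
      (kronecker_mem_unitaryGroup (hA.eigenvectorUnitary).2 (hB.eigenvectorUnitary).2),
    charpoly_diagonal_c]
  norm_num

lemma ent_mul (x y : ℝ) :
    (x * y) * Real.logb 2 (x * y) = y * (x * Real.logb 2 x) + x * (y * Real.logb 2 y) := by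
  rcases eq_or_ne x 0 with hx | hx
  · simp [hx]
  rcases eq_or_ne y 0 with hy | hy
  · simp [hy]
  rw [Real.logb_mul hx hy]; ring

lemma vnEntropy_kronecker {n m : Type} [Fintype n] [Fintype m] [DecidableEq n] [DecidableEq m]
    {A : Matrix n n ℂ} {B : Matrix m m ℂ}
    (hA : A.IsHermitian) (hB : B.IsHermitian) (htA : A.trace = 1) (htB : B.trace = 1) :
    vnEntropy (A ⊗ₖ B) = vnEntropy A + vnEntropy B := by
  have hsA : ∑ i, hA.eigenvalues i = 1 := by
    rw [sum_eigenvalues_eq_trace_re A hA, htA]; simp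
  have hsB : ∑ j, hB.eigenvalues j = 1 := by
    rw [sum_eigenvalues_eq_trace_re B hB, htB]; simp
  rw [vnEntropy_of_charpoly_prod (A ⊗ₖ B) (isHermitian_kronecker hA hB)
      (fun p : n × m => hA.eigenvalues p.1 * hB.eigenvalues p.2)
      (charpoly_kronecker_hermitian hA hB),
    vnEntropy, dif_pos hA, vnEntropy, dif_pos hB]
  rw [Fintype.sum_prod_type]
  have key : ∀ i, ∑ j, (hA.eigenvalues i * hB.eigenvalues j) *
      Real.logb 2 (hA.eigenvalues i * hB.eigenvalues j)
      = (hA.eigenvalues i * Real.logb 2 (hA.eigenvalues i)) +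
        hA.eigenvalues i * ∑ j, (hB.eigenvalues j * Real.logb 2 (hB.eigenvalues j)) := by
    intro i
    calc ∑ j, (hA.eigenvalues i * hB.eigenvalues j) *
        Real.logb 2 (hA.eigenvalues i * hB.eigenvalues j)
        = ∑ j, (hB.eigenvalues j * (hA.eigenvalues i * Real.logb 2 (hA.eigenvalues i)) +
            hA.eigenvalues i * (hB.eigenvalues j * Real.logb 2 (hB.eigenvalues j))) :=
          Finset.sum_congr rfl (fun j _ => ent_mul _ _)
      _ = (∑ j, hB.eigenvalues j) * (hA.eigenvalues i * Real.logb 2 (hA.eigenvalues i)) +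
          hA.eigenvalues i * ∑ j, (hB.eigenvalues j * Real.logb 2 (hB.eigenvalues j)) := by
          rw [Finset.sum_add_distrib, ← Finset.sum_mul, ← Finset.mul_sum]
      _ = _ := by rw [hsB, one_mul]
  rw [Finset.sum_congr rfl (fun i (_ : i ∈ Finset.univ) => key i), Finset.sum_add_distrib,
    ← Finset.sum_mul, hsA, one_mul]
  ring

end Aux

section Aux2
set_option linter.unusedSectionVars false
variable {A B : Type} [Fintype A] [Fintype B] [DecidableEq A] [DecidableEq B]

lemma ptraceB_isHermitian {M : Matrix (A × B) (A × B) ℂ} (hM : M.IsHermitian) :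
    (ptraceB M).IsHermitian := by
  ext a a'
  simp only [Matrix.conjTranspose_apply, ptraceB, Matrix.of_apply, star_sum]
  refine Finset.sum_congr rfl fun b _ => ?_
  have := congrFun (congrFun hM.eq (a, b)) (a', b)
  rw [← this]; rfl

lemma ptraceA_isHermitian {M : Matrix (A × B) (A × B) ℂ} (hM : M.IsHermitian) :
    (ptraceA M).IsHermitian := by
  ext b b'
  simp only [Matrix.conjTranspose_apply, ptraceA, Matrix.of_apply, star_sum]
  refine Finset.sum_congr rfl fun a _ => ?_
  have := congrFun (congrFun hM.eq (a, b)) (a, b')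
  rw [← this]; rfl

lemma ptraceB_trace (M : Matrix (A × B) (A × B) ℂ) : (ptraceB M).trace = M.trace := by
  simp [Matrix.trace, ptraceB, Matrix.diag, Fintype.sum_prod_type]

lemma ptraceA_trace (M : Matrix (A × B) (A × B) ℂ) : (ptraceA M).trace = M.trace := by
  rw [Matrix.trace, Matrix.trace, Fintype.sum_prod_type]
  rw [Finset.sum_comm]
  simp [ptraceA, Matrix.diag]

lemma slice_quadFormB (M : Matrix (A × B) (A × B) ℂ) (v : A → ℂ) (b : B) :
    star (fun p : A × B => if p.2 = b then v p.1 else 0) ⬝ᵥ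
      M *ᵥ (fun p : A × B => if p.2 = b then v p.1 else 0)
      = ∑ a, ∑ a', star (v a) * (M (a, b) (a', b) * v a') := by
  simp only [dotProduct, Matrix.mulVec, Pi.star_apply, Fintype.sum_prod_type]
  simp only [apply_ite star, star_zero, ite_mul, zero_mul, mul_ite, mul_zero]
  simp only [Finset.sum_ite_eq', Finset.mem_univ, if_true, Finset.mul_sum]

lemma slice_quadFormA (M : Matrix (A × B) (A × B) ℂ) (v : B → ℂ) (a : A) :
    star (fun p : A × B => if p.1 = a then v p.2 else 0) ⬝ᵥ
      M *ᵥ (fun p : A × B => if p.1 = a then v p.2 else 0)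
      = ∑ b, ∑ b', star (v b) * (M (a, b) (a, b') * v b') := by
  simp only [dotProduct, Matrix.mulVec, Pi.star_apply, Fintype.sum_prod_type]
  simp only [apply_ite star, star_zero, ite_mul, zero_mul, mul_ite, mul_zero]
  simp only [Finset.sum_ite_irrel, Finset.sum_const_zero, mul_ite, mul_zero]
  simp only [Finset.sum_ite_eq', Finset.mem_univ, if_true, Finset.mul_sum]

lemma ptraceB_posSemidef {M : Matrix (A × B) (A × B) ℂ} (hM : M.PosSemidef) :
    (ptraceB M).PosSemidef := by
  refine Matrix.PosSemidef.of_dotProduct_mulVec_nonneg (ptraceB_isHermitian hM.1) fun v => ?_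
  have key : (star v) ⬝ᵥ (ptraceB M) *ᵥ v
      = ∑ b : B, ∑ a, ∑ a', star (v a) * (M (a, b) (a', b) * v a') := by
    simp only [dotProduct, Matrix.mulVec, ptraceB, Matrix.of_apply, Pi.star_apply,
      Finset.sum_mul, Finset.mul_sum]
    rw [show (∑ x : A, ∑ x_1 : A, ∑ i : B, star (v x) * (M (x, i) (x_1, i) * v x_1))
        = ∑ x : A, ∑ i : B, ∑ x_1 : A, star (v x) * (M (x, i) (x_1, i) * v x_1) from
      Finset.sum_congr rfl fun x _ => Finset.sum_comm]
    exact Finset.sum_comm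
  rw [key]
  refine Finset.sum_nonneg fun b _ => ?_
  rw [← slice_quadFormB M v b]
  exact hM.dotProduct_mulVec_nonneg _

lemma ptraceA_posSemidef {M : Matrix (A × B) (A × B) ℂ} (hM : M.PosSemidef) :
    (ptraceA M).PosSemidef := by
  refine Matrix.PosSemidef.of_dotProduct_mulVec_nonneg (ptraceA_isHermitian hM.1) fun v => ?_
  have key : (star v) ⬝ᵥ (ptraceA M) *ᵥ v
      = ∑ a : A, ∑ b, ∑ b', star (v b) * (M (a, b) (a, b') * v b') := by
    simp only [dotProduct, Matrix.mulVec, ptraceA, Matrix.of_apply, Pi.star_apply,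
      Finset.sum_mul, Finset.mul_sum]
    rw [show (∑ x : B, ∑ x_1 : B, ∑ i : A, star (v x) * (M (i, x) (i, x_1) * v x_1))
        = ∑ x : B, ∑ i : A, ∑ x_1 : B, star (v x) * (M (i, x) (i, x_1) * v x_1) from
      Finset.sum_congr rfl fun x _ => Finset.sum_comm]
    exact Finset.sum_comm
  rw [key]
  refine Finset.sum_nonneg fun a _ => ?_
  rw [← slice_quadFormA M v a]
  exact hM.dotProduct_mulVec_nonneg _

lemma ptraceB_isDensity {M : Matrix (A × B) (A × B) ℂ} (hM : IsDensity M) :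
    IsDensity (ptraceB M) := ⟨ptraceB_posSemidef hM.1, (ptraceB_trace M).trans hM.2⟩

lemma ptraceA_isDensity {M : Matrix (A × B) (A × B) ℂ} (hM : IsDensity M) :
    IsDensity (ptraceA M) := ⟨ptraceA_posSemidef hM.1, (ptraceA_trace M).trans hM.2⟩

end Aux2

section Aux3
set_option linter.unusedSectionVars false
lemma neg_ent_le_two {x : ℝ} (hx : 0 ≤ x) : -(x * Real.logb 2 x) ≤ 2 := by
  rcases eq_or_lt_of_le hx with h | h
  · simp [← h]
  have hlog : -(x * Real.log x) ≤ 1 := by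
    have h1 : Real.log x⁻¹ ≤ x⁻¹ - 1 := Real.log_le_sub_one_of_pos (by positivity)
    rw [Real.log_inv] at h1
    have := mul_le_mul_of_nonneg_left h1 (le_of_lt h)
    calc -(x * Real.log x) = x * -Real.log x := by ring
      _ ≤ x * (x⁻¹ - 1) := this
      _ = 1 - x := by field_simp
      _ ≤ 1 := by linarith
  have hl2 : (1/2 : ℝ) ≤ Real.log 2 := by
    have := Real.log_two_gt_d9
    linarith
  have hl2pos : (0:ℝ) < Real.log 2 := by linarith
  rw [Real.logb, div_eq_mul_inv, ← mul_assoc]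
  calc -(x * Real.log x * (Real.log 2)⁻¹) = -(x * Real.log x) * (Real.log 2)⁻¹ := by ring
    _ ≤ 1 * (Real.log 2)⁻¹ := by
        apply mul_le_mul_of_nonneg_right hlog (by positivity)
    _ = (Real.log 2)⁻¹ := one_mul _
    _ ≤ 2 := by
        rw [inv_le_comm₀ hl2pos (by norm_num)]
        linarith

lemma vnEntropy_nonneg {n : Type} [Fintype n] [DecidableEq n] {ρ : Matrix n n ℂ}
    (h : IsDensity ρ) : 0 ≤ vnEntropy ρ := by
  rw [vnEntropy, dif_pos h.1.1, neg_nonneg]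
  refine Finset.sum_nonpos fun i _ => ?_
  have h0 : 0 ≤ h.1.1.eigenvalues i := h.1.eigenvalues_nonneg i
  have h1 : h.1.1.eigenvalues i ≤ 1 := by
    have hs : ∑ j, h.1.1.eigenvalues j = 1 := by
      rw [sum_eigenvalues_eq_trace_re ρ h.1.1, h.2]; simp
    rw [← hs]
    exact Finset.single_le_sum (fun j _ => h.1.eigenvalues_nonneg j) (Finset.mem_univ i)
  exact mul_nonpos_of_nonneg_of_nonpos h0 (Real.logb_nonpos one_lt_two h0 h1)

lemma vnEntropy_le_two_card {n : Type} [Fintype n] [DecidableEq n] {ρ : Matrix n n ℂ}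
    (h : IsDensity ρ) : vnEntropy ρ ≤ 2 * Fintype.card n := by
  rw [vnEntropy, dif_pos h.1.1, ← Finset.sum_neg_distrib]
  calc ∑ i, -(h.1.1.eigenvalues i * Real.logb 2 (h.1.1.eigenvalues i))
      ≤ ∑ _i : n, (2:ℝ) :=
        Finset.sum_le_sum fun i _ => neg_ent_le_two (h.1.eigenvalues_nonneg i)
    _ = 2 * Fintype.card n := by
        rw [Finset.sum_const, Finset.card_univ, nsmul_eq_mul, mul_comm]

end Aux3

section Aux4
set_option linter.unusedSectionVars false
section helpers

/-- sum over a function space of a product of independent factors -/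
lemma sum_fun_prod {ι C : Type} [Fintype ι] [Fintype C] [DecidableEq ι] (F : ι → C → ℂ) :
    ∑ h : ι → C, ∏ i, F i (h i) = ∏ i, ∑ x, F i x :=
  (Fintype.prod_sum F).symm

/-- sum over a function space with one coordinate pinned, diagonal off the pin -/
lemma sum_fun_prod_pin {C : Type} [Fintype C] [DecidableEq C] {n : ℕ} (k : Fin n)
    (G : Fin n → C → C → ℂ) (a c : C) :
    ∑ h : Fin n → C, (if h k = a then ∏ i, G i (h i) (Function.update h k c i) else 0)
      = G k a c * ∏ i ∈ Finset.univ.erase k, (∑ x, G i x x) := by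
  classical
  have step1 : ∀ h : Fin n → C, (if h k = a then ∏ i, G i (h i) (Function.update h k c i) else 0)
      = (if h k = a then G k a c * ∏ i ∈ Finset.univ.erase k, G i (h i) (h i) else 0) := by
    intro h
    by_cases hh : h k = a
    · rw [if_pos hh, if_pos hh]
      rw [← Finset.mul_prod_erase Finset.univ _ (Finset.mem_univ k)]
      congr 1
      · rw [Function.update_self, hh]
      · apply Finset.prod_congr rfl
        intro i hi
        rw [Function.update_of_ne (Finset.ne_of_mem_erase hi)]
    · rw [if_neg hh, if_neg hh]
  simp_rw [step1]
  -- now split the sum via piSplitAt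
  rw [← Equiv.sum_comp (Equiv.piSplitAt k (fun _ : Fin n => C)).symm]
  rw [Fintype.sum_prod_type]
  -- h = (piSplitAt k).symm (c₀, rest), (h k) = c₀
  have hk : ∀ (c₀ : C) (rest : {j // j ≠ k} → C),
      ((Equiv.piSplitAt k (fun _ : Fin n => C)).symm (c₀, rest)) k = c₀ := by
    intro c₀ rest
    simp [Equiv.piSplitAt]
  have hne : ∀ (c₀ : C) (rest : {j // j ≠ k} → C) (i : Fin n) (hi : i ≠ k),
      ((Equiv.piSplitAt k (fun _ : Fin n => C)).symm (c₀, rest)) i = rest ⟨i, hi⟩ := by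
    intro c₀ rest i hi
    simp [Equiv.piSplitAt, hi]
  simp only [hk]
  simp only [Finset.sum_ite_irrel, Finset.sum_const_zero]
  rw [Finset.sum_ite_eq' Finset.univ a]
  rw [if_pos (Finset.mem_univ a), ← Finset.mul_sum]
  congr 1
  have hrw : ∀ rest : {j // j ≠ k} → C,
      ∏ i ∈ Finset.univ.erase k,
        G i (((Equiv.piSplitAt k (fun _ : Fin n => C)).symm (a, rest)) i)
          (((Equiv.piSplitAt k (fun _ : Fin n => C)).symm (a, rest)) i)
      = ∏ j : {j // j ≠ k}, G j.1 (rest j) (rest j) := by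
    intro rest
    rw [Finset.prod_subtype (p := fun j => j ≠ k) (Finset.univ.erase k)
      (fun i => by simp [Finset.mem_erase]) (fun i =>
        G i (((Equiv.piSplitAt k (fun _ : Fin n => C)).symm (a, rest)) i)
          (((Equiv.piSplitAt k (fun _ : Fin n => C)).symm (a, rest)) i))]
    exact Finset.prod_congr rfl fun j _ => by rw [hne a rest j.1 j.2]
  simp_rw [hrw]
  rw [sum_fun_prod (fun (j : {j // j ≠ k}) (x : C) => G j.1 x x)]
  rw [Finset.prod_subtype (p := fun j => j ≠ k) (Finset.univ.erase k)
    (fun i => by simp [Finset.mem_erase]) (fun i => ∑ x, G i x x)]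

end helpers

section tpowsec

variable {A B : Type} [Fintype A] [Fintype B] [DecidableEq A] [DecidableEq B]

def funProdEquiv (C D : Type) (n : ℕ) : (Fin n → C × D) ≃ (Fin n → C) × (Fin n → D) where
  toFun f := (fun i => (f i).1, fun i => (f i).2)
  invFun p := fun i => (p.1 i, p.2 i)
  left_inv f := rfl
  right_inv p := rfl

lemma sum_pair_eq {C D : Type} [Fintype C] [Fintype D] {n : ℕ} (F : (Fin n → C × D) → ℂ) :
    ∑ h : Fin n → C × D, F h = ∑ f : Fin n → C, ∑ g : Fin n → D, F (fun i => (f i, g i)) := by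
  rw [← Equiv.sum_comp (funProdEquiv C D n).symm F, Fintype.sum_prod_type]
  rfl

lemma sum_sum_prod_eq {n : ℕ} (F : Fin n → (A × B) → ℂ) :
    ∑ f : Fin n → A, ∑ g : Fin n → B, ∏ i, F i (f i, g i) = ∏ i, ∑ p : A × B, F i p := by
  rw [← sum_pair_eq (fun h => ∏ i, F i (h i))]
  exact sum_fun_prod F

lemma tpow_trace (ρ : Matrix (A × B) (A × B) ℂ) (n : ℕ) :
    (tpow ρ n).trace = ρ.trace ^ n := by
  rw [Matrix.trace, Fintype.sum_prod_type]
  have : ∀ f g, (tpow ρ n).diag (f, g) = ∏ i, (fun p : A × B => ρ p p) (f i, g i) := by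
    intro f g; rfl
  simp_rw [this]
  rw [sum_sum_prod_eq (fun _ (p : A × B) => ρ p p)]
  rw [Finset.prod_const, Finset.card_univ, Fintype.card_fin]
  congr 1

lemma tpow_posSemidef {ρ : Matrix (A × B) (A × B) ℂ} (hρ : ρ.PosSemidef) (n : ℕ) :
    (tpow ρ n).PosSemidef := by
  obtain ⟨P, rfl⟩ := psd_exists_conjTranspose_mul hρ
  have key : tpow (Pᴴ * P) n = (tpow P n)ᴴ * (tpow P n) := by
    ext x y
    simp only [tpow, Matrix.of_apply, Matrix.mul_apply, Matrix.conjTranspose_apply]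
    rw [Fintype.sum_prod_type]
    have this1 : ∀ (f : Fin n → A) (g : Fin n → B),
        star (∏ i, P (f i, g i) (x.1 i, x.2 i)) * (∏ i, P (f i, g i) (y.1 i, y.2 i))
        = ∏ i, (fun p : A × B => star (P p (x.1 i, x.2 i)) * P p (y.1 i, y.2 i)) (f i, g i) := by
      intro f g
      rw [star_prod, ← Finset.prod_mul_distrib]
    calc ∏ i, (Pᴴ * P) (x.1 i, x.2 i) (y.1 i, y.2 i)
        = ∏ i, ∑ p : A × B, (fun p : A × B =>
            star (P p (x.1 i, x.2 i)) * P p (y.1 i, y.2 i)) p := by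
          refine Finset.prod_congr rfl fun i _ => ?_
          rw [Matrix.mul_apply]
          exact Finset.sum_congr rfl fun p _ => rfl
      _ = ∑ f : Fin n → A, ∑ g : Fin n → B, ∏ i,
            (fun p : A × B => star (P p (x.1 i, x.2 i)) * P p (y.1 i, y.2 i)) (f i, g i) :=
          (sum_sum_prod_eq _).symm
      _ = ∑ f : Fin n → A, ∑ g : Fin n → B,
            star (∏ i, P (f i, g i) (x.1 i, x.2 i)) * (∏ i, P (f i, g i) (y.1 i, y.2 i)) := by
          exact Finset.sum_congr rfl fun f _ => Finset.sum_congr rfl fun g _ => (this1 f g).symm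
  rw [key]
  exact Matrix.posSemidef_conjTranspose_mul_self _

lemma update_pair (f : Fin n → A) (g : Fin n → B) (k : Fin n) (a : A) (b : B) :
    Function.update (fun i => (f i, g i)) k (a, b)
      = fun i => (Function.update f k a i, Function.update g k b i) := by
  funext i
  by_cases hi : i = k
  · subst hi; simp
  · simp [Function.update_of_ne hi]

lemma tpow_copyMarginal {ρ : Matrix (A × B) (A × B) ℂ} (htr : ρ.trace = 1) (n : ℕ) (k : Fin n) :
    copyMarginal (tpow ρ n) k = ρ := by
  ext x y
  show (∑ f : Fin n → A, ∑ g : Fin n → B,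
    if f k = x.1 ∧ g k = x.2 then
      (tpow ρ n) (f, g) (Function.update f k y.1, Function.update g k y.2) else 0) = ρ x y
  have step : ∀ (f : Fin n → A) (g : Fin n → B),
      (if f k = x.1 ∧ g k = x.2 then
        (tpow ρ n) (f, g) (Function.update f k y.1, Function.update g k y.2) else 0)
      = (fun h : Fin n → A × B => if h k = (x.1, x.2) then
          ∏ i, ρ (h i) (Function.update h k (y.1, y.2) i) else 0) (fun i => (f i, g i)) := by
    intro f g
    simp only [Prod.mk.injEq]
    congr 1
    rw [update_pair]
    rfl
  have key : (∑ h : Fin n → A × B, if h k = (x.1, x.2) then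
      ∏ i, ρ (h i) (Function.update h k (y.1, y.2) i) else 0) = ρ x y := by
    rw [sum_fun_prod_pin k (fun _ p q => ρ p q) (x.1, x.2) (y.1, y.2)]
    have hone : ∀ i ∈ Finset.univ.erase k, (∑ p : A × B, ρ p p) = (1 : ℂ) := fun i _ => htr
    rw [Finset.prod_congr rfl hone, Finset.prod_const_one, mul_one]
  rw [← key, sum_pair_eq]
  exact Finset.sum_congr rfl fun f _ => Finset.sum_congr rfl fun g _ => step f g

lemma tpow_isDensity {ρ : Matrix (A × B) (A × B) ℂ} (hρ : IsDensity ρ) (n : ℕ) :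
    IsDensity (tpow ρ n) := by
  refine ⟨tpow_posSemidef hρ.1 n, ?_⟩
  rw [tpow_trace, hρ.2, one_pow]

end tpowsec

end Aux4

section Aux5
set_option linter.unusedSectionVars false
section cut

variable {X Y α β α' β' : Type}
variable [Fintype X] [Fintype Y] [Fintype α] [Fintype β] [Fintype α'] [Fintype β']
variable [DecidableEq X] [DecidableEq Y] [DecidableEq α] [DecidableEq β]
  [DecidableEq α'] [DecidableEq β']

def cutE (u : X ≃ α × α') (v : Y ≃ β × β') : (X × Y) ≃ ((α × β) × (α' × β')) where
  toFun p := (((u p.1).1, (v p.2).1), ((u p.1).2, (v p.2).2))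
  invFun q := (u.symm (q.1.1, q.2.1), v.symm (q.1.2, q.2.2))
  left_inv p := by simp
  right_inv q := by simp

lemma trace_submatrix_equiv' {M : Matrix α α ℂ} {γ : Type} [Fintype γ] (e : γ ≃ α) :
    (M.submatrix e e).trace = M.trace :=
  Equiv.sum_comp e (fun j => M j j)

lemma ptraceB_cut (τ₁ : Matrix (α × β) (α × β) ℂ) (τ₂ : Matrix (α' × β') (α' × β') ℂ)
    (u : X ≃ α × α') (v : Y ≃ β × β') :
    ptraceB ((τ₁ ⊗ₖ τ₂).submatrix (cutE u v) (cutE u v))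
      = ((ptraceB τ₁) ⊗ₖ (ptraceB τ₂)).submatrix u u := by
  ext x x'
  show (∑ y : Y, (τ₁ ⊗ₖ τ₂) (cutE u v (x, y)) (cutE u v (x', y)))
    = (ptraceB τ₁ ⊗ₖ ptraceB τ₂) (u x) (u x')
  have : ∀ y : Y, (τ₁ ⊗ₖ τ₂) (cutE u v (x, y)) (cutE u v (x', y))
      = (fun q : β × β' => τ₁ ((u x).1, q.1) ((u x').1, q.1) *
          τ₂ ((u x).2, q.2) ((u x').2, q.2)) (v y) := fun y => rfl
  rw [Finset.sum_congr rfl fun y _ => this y,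
    Equiv.sum_comp v (fun q : β × β' => τ₁ ((u x).1, q.1) ((u x').1, q.1) *
      τ₂ ((u x).2, q.2) ((u x').2, q.2)), Fintype.sum_prod_type]
  show ∑ b, ∑ b', τ₁ ((u x).1, b) ((u x').1, b) * τ₂ ((u x).2, b') ((u x').2, b')
    = (∑ b, τ₁ ((u x).1, b) ((u x').1, b)) * (∑ b', τ₂ ((u x).2, b') ((u x').2, b'))
  rw [Finset.sum_mul_sum]

lemma ptraceA_cut (τ₁ : Matrix (α × β) (α × β) ℂ) (τ₂ : Matrix (α' × β') (α' × β') ℂ)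
    (u : X ≃ α × α') (v : Y ≃ β × β') :
    ptraceA ((τ₁ ⊗ₖ τ₂).submatrix (cutE u v) (cutE u v))
      = ((ptraceA τ₁) ⊗ₖ (ptraceA τ₂)).submatrix v v := by
  ext y y'
  show (∑ x : X, (τ₁ ⊗ₖ τ₂) (cutE u v (x, y)) (cutE u v (x, y')))
    = (ptraceA τ₁ ⊗ₖ ptraceA τ₂) (v y) (v y')
  have : ∀ x : X, (τ₁ ⊗ₖ τ₂) (cutE u v (x, y)) (cutE u v (x, y'))
      = (fun q : α × α' => τ₁ (q.1, (v y).1) (q.1, (v y').1) *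
          τ₂ (q.2, (v y).2) (q.2, (v y').2)) (u x) := fun x => rfl
  rw [Finset.sum_congr rfl fun x _ => this x,
    Equiv.sum_comp u (fun q : α × α' => τ₁ (q.1, (v y).1) (q.1, (v y').1) *
      τ₂ (q.2, (v y).2) (q.2, (v y').2)), Fintype.sum_prod_type]
  show ∑ a, ∑ a', τ₁ (a, (v y).1) (a, (v y').1) * τ₂ (a', (v y).2) (a', (v y').2)
    = (∑ a, τ₁ (a, (v y).1) (a, (v y').1)) * (∑ a', τ₂ (a', (v y).2) (a', (v y').2))
  rw [Finset.sum_mul_sum]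

lemma isDensity_cut {τ₁ : Matrix (α × β) (α × β) ℂ} {τ₂ : Matrix (α' × β') (α' × β') ℂ}
    (h₁ : IsDensity τ₁) (h₂ : IsDensity τ₂) (u : X ≃ α × α') (v : Y ≃ β × β') :
    IsDensity ((τ₁ ⊗ₖ τ₂).submatrix (cutE u v) (cutE u v)) := by
  constructor
  · exact (posSemidef_kronecker h₁.1 h₂.1).submatrix _
  · rw [trace_submatrix_equiv' (cutE u v), Matrix.trace_kronecker, h₁.2, h₂.2, mul_one]

lemma mutInfo_cut {τ₁ : Matrix (α × β) (α × β) ℂ} {τ₂ : Matrix (α' × β') (α' × β') ℂ}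
    (h₁ : IsDensity τ₁) (h₂ : IsDensity τ₂) (u : X ≃ α × α') (v : Y ≃ β × β') :
    mutInfo ((τ₁ ⊗ₖ τ₂).submatrix (cutE u v) (cutE u v)) = mutInfo τ₁ + mutInfo τ₂ := by
  have hB₁ := ptraceB_isDensity h₁
  have hB₂ := ptraceB_isDensity h₂
  have hA₁ := ptraceA_isDensity h₁
  have hA₂ := ptraceA_isDensity h₂
  rw [mutInfo, ptraceB_cut τ₁ τ₂ u v, ptraceA_cut τ₁ τ₂ u v,
    vnEntropy_submatrix u _ (isHermitian_kronecker hB₁.1.1 hB₂.1.1),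
    vnEntropy_submatrix v _ (isHermitian_kronecker hA₁.1.1 hA₂.1.1),
    vnEntropy_submatrix (cutE u v) _ (isHermitian_kronecker h₁.1.1 h₂.1.1),
    vnEntropy_kronecker hB₁.1.1 hB₂.1.1 hB₁.2 hB₂.2,
    vnEntropy_kronecker hA₁.1.1 hA₂.1.1 hA₁.2 hA₂.2,
    vnEntropy_kronecker h₁.1.1 h₂.1.1 h₁.2 h₂.2, mutInfo, mutInfo]
  ring

end cut

end Aux5

section Aux6
set_option linter.unusedSectionVars false
lemma ite_mul_split {P Q : Prop} [Decidable P] [Decidable Q] (a b : ℂ) :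
    (if P ∧ Q then a * b else 0) = (if P then a else 0) * (if Q then b else 0) := by
  by_cases hP : P <;> by_cases hQ : Q <;> simp [hP, hQ]

lemma quad_factor {α β γ δ : Type} [Fintype α] [Fintype β] [Fintype γ] [Fintype δ]
    (p : α → β → ℂ) (q : γ → δ → ℂ) :
    ∑ a, ∑ c, ∑ b, ∑ d, p a b * q c d = (∑ a, ∑ b, p a b) * (∑ c, ∑ d, q c d) := by
  calc ∑ a, ∑ c, ∑ b, ∑ d, p a b * q c d
      = ∑ a, ∑ c, (∑ b, p a b) * (∑ d, q c d) := by
        refine Finset.sum_congr rfl fun a _ => Finset.sum_congr rfl fun c _ => ?_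
        rw [Finset.sum_mul_sum]
    _ = (∑ a, ∑ b, p a b) * (∑ c, ∑ d, q c d) := by rw [Finset.sum_mul_sum]

variable {A B A' B' : Type}
    [Fintype A] [Fintype B] [Fintype A'] [Fintype B']
    [DecidableEq A] [DecidableEq B] [DecidableEq A'] [DecidableEq B']

lemma copyMarginal_cut {n : ℕ}
    (τ₁ : Matrix ((Fin n → A) × (Fin n → B)) ((Fin n → A) × (Fin n → B)) ℂ)
    (τ₂ : Matrix ((Fin n → A') × (Fin n → B')) ((Fin n → A') × (Fin n → B')) ℂ)
    (k : Fin n) :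
    copyMarginal ((τ₁ ⊗ₖ τ₂).submatrix (cutE (funProdEquiv A A' n) (funProdEquiv B B' n))
        (cutE (funProdEquiv A A' n) (funProdEquiv B B' n))) k
      = tens2 (copyMarginal τ₁ k) (copyMarginal τ₂ k) := by
  ext x y
  set T := (τ₁ ⊗ₖ τ₂).submatrix (cutE (funProdEquiv A A' n) (funProdEquiv B B' n))
      (cutE (funProdEquiv A A' n) (funProdEquiv B B' n)) with hT
  show (∑ f : Fin n → A × A', ∑ g : Fin n → B × B',
      if f k = x.1 ∧ g k = x.2 then
        T (f, g) (Function.update f k y.1, Function.update g k y.2) else 0)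
    = (copyMarginal τ₁ k) (x.1.1, x.2.1) (y.1.1, y.2.1) *
      (copyMarginal τ₂ k) (x.1.2, x.2.2) (y.1.2, y.2.2)
  have key : ∀ (f₁ : Fin n → A) (f₂ : Fin n → A') (g₁ : Fin n → B) (g₂ : Fin n → B'),
      (if (fun i => (f₁ i, f₂ i)) k = x.1 ∧ (fun i => (g₁ i, g₂ i)) k = x.2 then
        T ((fun i => (f₁ i, f₂ i)), (fun i => (g₁ i, g₂ i)))
          (Function.update (fun i => (f₁ i, f₂ i)) k y.1,
           Function.update (fun i => (g₁ i, g₂ i)) k y.2) else 0)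
      = (if f₁ k = x.1.1 ∧ g₁ k = x.2.1 then
            τ₁ (f₁, g₁) (Function.update f₁ k y.1.1, Function.update g₁ k y.2.1) else 0) *
        (if f₂ k = x.1.2 ∧ g₂ k = x.2.2 then
            τ₂ (f₂, g₂) (Function.update f₂ k y.1.2, Function.update g₂ k y.2.2) else 0) := by
    intro f₁ f₂ g₁ g₂
    have hval : T ((fun i => (f₁ i, f₂ i)), (fun i => (g₁ i, g₂ i)))
        (Function.update (fun i => (f₁ i, f₂ i)) k y.1,
         Function.update (fun i => (g₁ i, g₂ i)) k y.2)
        = τ₁ (f₁, g₁) (Function.update f₁ k y.1.1, Function.update g₁ k y.2.1) *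
          τ₂ (f₂, g₂) (Function.update f₂ k y.1.2, Function.update g₂ k y.2.2) := by
      rw [hT]
      rw [show Function.update (fun i => (f₁ i, f₂ i)) k y.1
          = fun i => (Function.update f₁ k y.1.1 i, Function.update f₂ k y.1.2 i) from
        update_pair f₁ f₂ k y.1.1 y.1.2]
      rw [show Function.update (fun i => (g₁ i, g₂ i)) k y.2
          = fun i => (Function.update g₁ k y.2.1 i, Function.update g₂ k y.2.2 i) from
        update_pair g₁ g₂ k y.2.1 y.2.2]
      rfl
    have hcond : ((fun i => (f₁ i, f₂ i)) k = x.1 ∧ (fun i => (g₁ i, g₂ i)) k = x.2)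
        ↔ ((f₁ k = x.1.1 ∧ g₁ k = x.2.1) ∧ (f₂ k = x.1.2 ∧ g₂ k = x.2.2)) := by
      simp only [Prod.ext_iff]
      tauto
    rw [if_congr hcond hval rfl, ite_mul_split]
  calc (∑ f : Fin n → A × A', ∑ g : Fin n → B × B',
      if f k = x.1 ∧ g k = x.2 then
        T (f, g) (Function.update f k y.1, Function.update g k y.2) else 0)
      = ∑ f₁ : Fin n → A, ∑ f₂ : Fin n → A', ∑ g : Fin n → B × B',
          (if (fun i => (f₁ i, f₂ i)) k = x.1 ∧ g k = x.2 then
            T ((fun i => (f₁ i, f₂ i)), g)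
              (Function.update (fun i => (f₁ i, f₂ i)) k y.1, Function.update g k y.2)
          else 0) :=
        sum_pair_eq _
    _ = ∑ f₁ : Fin n → A, ∑ f₂ : Fin n → A', ∑ g₁ : Fin n → B, ∑ g₂ : Fin n → B',
          (if (fun i => (f₁ i, f₂ i)) k = x.1 ∧ (fun i => (g₁ i, g₂ i)) k = x.2 then
            T ((fun i => (f₁ i, f₂ i)), (fun i => (g₁ i, g₂ i)))
              (Function.update (fun i => (f₁ i, f₂ i)) k y.1,
               Function.update (fun i => (g₁ i, g₂ i)) k y.2)
          else 0) := by
        refine Finset.sum_congr rfl fun f₁ _ => Finset.sum_congr rfl fun f₂ _ => ?_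
        exact sum_pair_eq _
    _ = ∑ f₁ : Fin n → A, ∑ f₂ : Fin n → A', ∑ g₁ : Fin n → B, ∑ g₂ : Fin n → B',
          (if f₁ k = x.1.1 ∧ g₁ k = x.2.1 then
            τ₁ (f₁, g₁) (Function.update f₁ k y.1.1, Function.update g₁ k y.2.1) else 0) *
          (if f₂ k = x.1.2 ∧ g₂ k = x.2.2 then
            τ₂ (f₂, g₂) (Function.update f₂ k y.1.2, Function.update g₂ k y.2.2) else 0) := by
        refine Finset.sum_congr rfl fun f₁ _ => Finset.sum_congr rfl fun f₂ _ => ?_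
        refine Finset.sum_congr rfl fun g₁ _ => Finset.sum_congr rfl fun g₂ _ => ?_
        exact key f₁ f₂ g₁ g₂
    _ = (∑ f₁ : Fin n → A, ∑ g₁ : Fin n → B,
          if f₁ k = x.1.1 ∧ g₁ k = x.2.1 then
            τ₁ (f₁, g₁) (Function.update f₁ k y.1.1, Function.update g₁ k y.2.1) else 0) *
        (∑ f₂ : Fin n → A', ∑ g₂ : Fin n → B',
          if f₂ k = x.1.2 ∧ g₂ k = x.2.2 then
            τ₂ (f₂, g₂) (Function.update f₂ k y.1.2, Function.update g₂ k y.2.2) else 0) :=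
        quad_factor _ _
    _ = _ := rfl

end Aux6

section Aux7
set_option linter.unusedSectionVars false


variable {A B : Type} [Fintype A] [Fintype B] [DecidableEq A] [DecidableEq B]

lemma mutInfo_lower {τ : Matrix (A × B) (A × B) ℂ} (hτ : IsDensity τ) :
    -(2 * (Fintype.card (A × B) : ℝ)) ≤ mutInfo τ := by
  have h1 := vnEntropy_nonneg (ptraceB_isDensity hτ)
  have h2 := vnEntropy_nonneg (ptraceA_isDensity hτ)
  have h3 := vnEntropy_le_two_card hτ
  rw [mutInfo]
  linarith

lemma Ib_set_bddBelow (ρ : Matrix (A × B) (A × B) ℂ) (n : ℕ) :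
    BddBelow {x | ∃ τ, IsBroadcast n τ ρ ∧ x = mutInfo τ} := by
  refine ⟨-(2 * (Fintype.card ((Fin n → A) × (Fin n → B)) : ℝ)), ?_⟩
  rintro x ⟨τ, hb, rfl⟩
  exact mutInfo_lower hb.1

lemma Ib_set_nonempty {ρ : Matrix (A × B) (A × B) ℂ} (hρ : IsDensity ρ) (n : ℕ) :
    {x | ∃ τ, IsBroadcast n τ ρ ∧ x = mutInfo τ}.Nonempty :=
  ⟨mutInfo (tpow ρ n), tpow ρ n, ⟨tpow_isDensity hρ n, fun k => tpow_copyMarginal hρ.2 n k⟩, rfl⟩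

lemma Ib_subadd {A' B' : Type} [Fintype A'] [Fintype B'] [DecidableEq A'] [DecidableEq B']
    {ρ : Matrix (A × B) (A × B) ℂ} {σ : Matrix (A' × B') (A' × B') ℂ}
    (hρ : IsDensity ρ) (hσ : IsDensity σ) (n : ℕ) :
    Ib n (tens2 ρ σ) ≤ Ib n ρ + Ib n σ := by
  have hmem : ∀ x₁ ∈ {x | ∃ τ, IsBroadcast n τ ρ ∧ x = mutInfo τ},
      ∀ x₂ ∈ {x | ∃ τ, IsBroadcast n τ σ ∧ x = mutInfo τ},
      Ib n (tens2 ρ σ) ≤ x₁ + x₂ := by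
    rintro x₁ ⟨τ₁, hb₁, rfl⟩ x₂ ⟨τ₂, hb₂, rfl⟩
    apply csInf_le (Ib_set_bddBelow _ n)
    refine ⟨(τ₁ ⊗ₖ τ₂).submatrix (cutE (funProdEquiv A A' n) (funProdEquiv B B' n))
      (cutE (funProdEquiv A A' n) (funProdEquiv B B' n)), ⟨?_, ?_⟩, ?_⟩
    · exact isDensity_cut hb₁.1 hb₂.1 _ _
    · intro k
      rw [copyMarginal_cut τ₁ τ₂ k, hb₁.2 k, hb₂.2 k]
    · exact (mutInfo_cut hb₁.1 hb₂.1 _ _).symm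
  have hIbρ : Ib n ρ = sInf {x | ∃ τ, IsBroadcast n τ ρ ∧ x = mutInfo τ} := rfl
  have hIbσ : Ib n σ = sInf {x | ∃ τ, IsBroadcast n τ σ ∧ x = mutInfo τ} := rfl
  have key2 : ∀ x₁ ∈ {x | ∃ τ, IsBroadcast n τ ρ ∧ x = mutInfo τ},
      Ib n (tens2 ρ σ) - x₁ ≤ Ib n σ := by
    intro x₁ hx₁
    rw [hIbσ]
    refine le_csInf (Ib_set_nonempty hσ n) fun x₂ hx₂ => ?_
    have := hmem x₁ hx₁ x₂ hx₂
    linarith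
  have key : Ib n (tens2 ρ σ) - Ib n σ ≤ Ib n ρ := by
    rw [hIbρ]
    refine le_csInf (Ib_set_nonempty hρ n) fun x₁ hx₁ => ?_
    have := key2 x₁ hx₁
    linarith
  linarith




end Aux7

/-- subadditivity of I_b^{(∞)} under tensor products, with the
cut AA' : BB', stated via the defining limits. -/
theorem stmt_13 {A B A' B' : Type}
    [Fintype A] [Fintype B] [Fintype A'] [Fintype B']
    [DecidableEq A] [DecidableEq B] [DecidableEq A'] [DecidableEq B']
    (ρ : Matrix (A × B) (A × B) ℂ) (σ : Matrix (A' × B') (A' × B') ℂ)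
    (hρ : IsDensity ρ) (hσ : IsDensity σ)
    (L₁ L₂ L : ℝ)
    (hL₁ : Tendsto (fun n : ℕ => Ib n ρ / n) atTop (nhds L₁))
    (hL₂ : Tendsto (fun n : ℕ => Ib n σ / n) atTop (nhds L₂))
    (hL : Tendsto (fun n : ℕ => Ib n (tens2 ρ σ) / n) atTop (nhds L)) :
    L ≤ L₁ + L₂ := by
  have hle : ∀ n : ℕ, Ib n (tens2 ρ σ) / n ≤ Ib n ρ / n + Ib n σ / n := by
    intro n
    rcases Nat.eq_zero_or_pos n with hn | hn
    · subst hn; simp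
    · rw [← add_div]
      exact (div_le_div_iff_of_pos_right (by exact_mod_cast hn)).mpr (Ib_subadd hρ hσ n)
  exact le_of_tendsto_of_tendsto' hL (hL₁.add hL₂) hle


end
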